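/- Let p ≡ 3 (mod 4) be prime and m₂, m₃, n₂, n₃ ∈ ℤ with gcd(n₂n₃, p) = 1 and gcd(m₂n₃ − m₃n₂, p) = 1 (nondegeneracy). Let t ≥ 1. Then the number of pairs (a, b) ∈ (ℤ/p^tℤ)² with gcd(a, b, p) = 1 satisfying the simultaneous congruences −2m₂(a²+b²)⁻¹ + 4(m₂a − m₃b)a(a²+b²)⁻² + n₂ ≡ 0 (mod p^t) and 2m₃(a²+b²)⁻¹ + 4(m₂a − m₃b)b(a²+b²)⁻² + n₃ ≡ 0 (mod p^t) is bounded by an absolute constant (independent of t). -/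

import Mathlib

section StationaryAux

lemma stationary_unit_iff (p t : ℕ) (hp : p.Prime) (ht : 1 ≤ t) (x : ZMod (p^t)) :
    IsUnit x ↔ ¬ p ∣ x.val := by
  haveI : NeZero (p^t) := ⟨pow_ne_zero _ hp.pos.ne'⟩
  conv_lhs => rw [← ZMod.natCast_rightInverse x]
  rw [ZMod.isUnit_iff_coprime, Nat.coprime_pow_right_iff (by omega),
    Nat.coprime_comm, hp.coprime_iff_not_dvd]

lemma stationary_sq_add_sq_unit (p t : ℕ) (hp : p.Prime) (hp3 : p % 4 = 3) (ht : 1 ≤ t)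
    (x y : ZMod (p^t)) (h : IsUnit x ∨ IsUnit y) : IsUnit (x^2 + y^2) := by
  haveI : Fact p.Prime := ⟨hp⟩
  haveI : NeZero (p^t) := ⟨pow_ne_zero _ hp.pos.ne'⟩
  rw [stationary_unit_iff p t hp ht]
  rw [stationary_unit_iff p t hp ht, stationary_unit_iff p t hp ht] at h
  intro hd
  set f : ZMod (p^t) →+* ZMod p := ZMod.castHom (dvd_pow_self p (by omega)) (ZMod p)
  have hker : ∀ z : ZMod (p^t), f z = 0 ↔ p ∣ z.val := by
    intro z
    have : f z = (z.val : ZMod p) := by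
      simp [f, ZMod.castHom_apply, ← ZMod.natCast_val]
    rw [this, ZMod.natCast_eq_zero_iff]
  have hsum : f x ^ 2 + f y ^ 2 = 0 := by
    have := (hker _).2 hd
    push_cast at this
    simpa using this
  have hx0 : f x ≠ 0 ∨ f y ≠ 0 := by
    rcases h with h | h
    · exact Or.inl (fun hc => h ((hker x).1 hc))
    · exact Or.inr (fun hc => h ((hker y).1 hc))
  have hy : f y ≠ 0 ∧ f x ≠ 0 := by
    constructor
    · intro hc
      rcases hx0 with h' | h'
      · rw [hc] at hsum; apply h'; simpa [pow_eq_zero_iff] using hsum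
      · exact h' hc
    · intro hc
      rcases hx0 with h' | h'
      · exact h' hc
      · rw [hc] at hsum; apply h'; simpa [pow_eq_zero_iff] using hsum
  have hsq : IsSquare (-1 : ZMod p) := by
    refine ⟨f x * (f y)⁻¹, ?_⟩
    have : (f x * (f y)⁻¹) * (f x * (f y)⁻¹) = (f x ^2) * ((f y)^2)⁻¹ := by
      field_simp
    rw [this]
    rw [eq_comm, mul_inv_eq_iff_eq_mul₀ (pow_ne_zero 2 hy.1)]
    linear_combination hsum
  rw [ZMod.exists_sq_eq_neg_one_iff] at hsq
  exact hsq hp3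

lemma stationary_cubics (N : ℕ) (m₂ m₃ n₂ n₃ : ℤ) (a b : ZMod N)
    (hu : IsUnit (a^2+b^2))
    (e1 : -2 * (m₂ : ZMod N) * (a ^ 2 + b ^ 2)⁻¹
          + 4 * ((m₂ : ZMod N) * a - (m₃ : ZMod N) * b) * a
              * ((a ^ 2 + b ^ 2)⁻¹) ^ 2 + (n₂ : ZMod N) = 0)
    (e2 : 2 * (m₃ : ZMod N) * (a ^ 2 + b ^ 2)⁻¹
          + 4 * ((m₂ : ZMod N) * a - (m₃ : ZMod N) * b) * b
              * ((a ^ 2 + b ^ 2)⁻¹) ^ 2 + (n₃ : ZMod N) = 0) :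
    (((n₂ : ZMod N)*a + n₃*b)*(a^2+b^2) + 2*((m₂:ZMod N)*a - m₃*b) = 0)
    ∧ (((n₂ : ZMod N)*b - n₃*a)*(a^2+b^2) - 2*((m₂:ZMod N)*b + m₃*a) = 0) := by
  set u : ZMod N := a^2+b^2 with hudef
  have hui : u * u⁻¹ = 1 := ZMod.mul_inv_of_unit u hu
  constructor
  · apply hu.mul_left_cancel
    rw [mul_zero]
    linear_combination (a*u^2) * e1 + (b*u^2) * e2
      + (-2*((m₂:ZMod N)*a - m₃*b)*u*(2*u*u⁻¹+1)) * hui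
  · apply hu.mul_left_cancel
    rw [mul_zero]
    linear_combination (b*u^2) * e1 - (a*u^2) * e2
      + (2*((m₂:ZMod N)*b + m₃*a)*u) * hui

lemma stationary_gauss_identity (a b m₂ m₃ n₂ n₃ : ℤ) :
    (⟨a,-b⟩ : GaussianInt) * ((⟨a,b⟩ : GaussianInt)^2 * ⟨n₂,-n₃⟩ - ⟨-2*m₂, 2*m₃⟩)
      = (((n₂*a+n₃*b)*(a^2+b^2)+2*(m₂*a-m₃*b) : ℤ) : GaussianInt)
        + ⟨0,1⟩ * (((n₂*b-n₃*a)*(a^2+b^2)-2*(m₂*b+m₃*a) : ℤ) : GaussianInt) := by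
  have h2 : ∀ x : GaussianInt, x^2 = x*x := fun x => sq x
  ext <;>
    simp [h2, Zsqrtd.re_mul, Zsqrtd.im_mul, Zsqrtd.re_intCast, Zsqrtd.im_intCast] <;> ring

/-- For each solution, the Gaussian lift `X = a + b i` satisfies `X² ν = μ (mod p^t)`
and is not divisible by `p`. -/
lemma stationary_sol_dvd (p t : ℕ) (hp : p.Prime) (hp3 : p % 4 = 3) (ht : 1 ≤ t)
    (m₂ m₃ n₂ n₃ : ℤ) (z : ZMod (p^t) × ZMod (p^t))
    (hunit : IsUnit z.1 ∨ IsUnit z.2)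
    (e1 : -2 * (m₂ : ZMod (p ^ t)) * (z.1 ^ 2 + z.2 ^ 2)⁻¹
          + 4 * ((m₂ : ZMod (p ^ t)) * z.1 - (m₃ : ZMod (p ^ t)) * z.2) * z.1
              * ((z.1 ^ 2 + z.2 ^ 2)⁻¹) ^ 2 + (n₂ : ZMod (p ^ t)) = 0)
    (e2 : 2 * (m₃ : ZMod (p ^ t)) * (z.1 ^ 2 + z.2 ^ 2)⁻¹
          + 4 * ((m₂ : ZMod (p ^ t)) * z.1 - (m₃ : ZMod (p ^ t)) * z.2) * z.2
              * ((z.1 ^ 2 + z.2 ^ 2)⁻¹) ^ 2 + (n₃ : ZMod (p ^ t)) = 0) :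
    ¬ (((p:ℤ) : GaussianInt) ∣ ⟨(z.1.val:ℤ), (z.2.val:ℤ)⟩) ∧
    (((p:ℤ) : GaussianInt))^t ∣
      ((⟨(z.1.val:ℤ), (z.2.val:ℤ)⟩ : GaussianInt)^2 * ⟨n₂,-n₃⟩ - ⟨-2*m₂, 2*m₃⟩) := by
  haveI : Fact p.Prime := ⟨hp⟩
  haveI : NeZero (p^t) := ⟨pow_ne_zero _ hp.pos.ne'⟩
  set A : ℤ := (z.1.val : ℤ) with hAdef
  set B : ℤ := (z.2.val : ℤ) with hBdef
  have hA : ((A : ℤ) : ZMod (p^t)) = z.1 := by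
    rw [hAdef]; push_cast; exact ZMod.natCast_rightInverse z.1
  have hB : ((B : ℤ) : ZMod (p^t)) = z.2 := by
    rw [hBdef]; push_cast; exact ZMod.natCast_rightInverse z.2
  have hu : IsUnit (z.1^2 + z.2^2) :=
    stationary_sq_add_sq_unit p t hp hp3 ht z.1 z.2 hunit
  obtain ⟨hG1, hG2⟩ := stationary_cubics (p^t) m₂ m₃ n₂ n₃ z.1 z.2 hu e1 e2
  -- integer divisibilities
  have hd1 : ((p^t : ℕ) : ℤ) ∣ (n₂*A + n₃*B)*(A^2+B^2) + 2*(m₂*A - m₃*B) := by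
    rw [← ZMod.intCast_zmod_eq_zero_iff_dvd]
    push_cast [hA, hB]
    linear_combination hG1
  have hd2 : ((p^t : ℕ) : ℤ) ∣ (n₂*B - n₃*A)*(A^2+B^2) - 2*(m₂*B + m₃*A) := by
    rw [← ZMod.intCast_zmod_eq_zero_iff_dvd]
    push_cast [hA, hB]
    linear_combination hG2
  -- not divisible by p
  have hnd : ¬ (((p:ℤ) : GaussianInt) ∣ ⟨A, B⟩) := by
    rw [Zsqrtd.intCast_dvd]
    rintro ⟨h1, h2⟩
    simp only [hAdef, hBdef] at h1 h2
    rw [Int.natCast_dvd_natCast] at h1 h2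
    rcases hunit with h | h
    · exact (stationary_unit_iff p t hp ht z.1).1 h h1
    · exact (stationary_unit_iff p t hp ht z.2).1 h h2
  refine ⟨hnd, ?_⟩
  have hπt : (((p:ℤ) : GaussianInt))^t = (((p^t : ℕ) : ℤ) : GaussianInt) := by push_cast; ring
  have hdvdprod : (((p:ℤ) : GaussianInt))^t ∣
      (⟨A,-B⟩ : GaussianInt) * ((⟨A,B⟩ : GaussianInt)^2 * ⟨n₂,-n₃⟩ - ⟨-2*m₂, 2*m₃⟩) := by
    rw [stationary_gauss_identity A B m₂ m₃ n₂ n₃, hπt]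
    exact dvd_add ((Zsqrtd.intCast_dvd_intCast _ _).2 hd1)
      (Dvd.dvd.mul_left ((Zsqrtd.intCast_dvd_intCast _ _).2 hd2) _)
  have hprime : Prime ((p:ℤ) : GaussianInt) := by
    have := (GaussianInt.prime_iff_mod_four_eq_three_of_nat_prime p).2 hp3
    have hcast : ((p:ℤ) : GaussianInt) = ((p:ℕ) : GaussianInt) := by push_cast; ring
    rwa [hcast]
  have hndbar : ¬ (((p:ℤ) : GaussianInt) ∣ ⟨A, -B⟩) := by
    rw [Zsqrtd.intCast_dvd]
    rintro ⟨h1, h2⟩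
    exact hnd ((Zsqrtd.intCast_dvd _ _).2 ⟨h1, (dvd_neg.1 h2)⟩)
  exact hprime.pow_dvd_of_dvd_mul_left t hndbar hdvdprod

end StationaryAux

/-- Let `p ≡ 3 (mod 4)` be prime and `m₂, m₃, n₂, n₃ ∈ ℤ` with `p ∤ n₂n₃` and
`p ∤ m₂n₃ − m₃n₂`.  For any `t ≥ 1`, the number of pairs `(a, b) ∈ (ℤ/p^tℤ)²`
with `gcd(a, b, p) = 1` satisfying
`−2m₂(a²+b²)⁻¹ + 4(m₂a − m₃b)a(a²+b²)⁻² + n₂ ≡ 0 (mod p^t)` and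
`2m₃(a²+b²)⁻¹ + 4(m₂a − m₃b)b(a²+b²)⁻² + n₃ ≡ 0 (mod p^t)`
is bounded by an absolute constant, independent of all the parameters. -/
theorem stationary_point_count_bounded :
    ∃ C : ℕ, ∀ (p t : ℕ) (m₂ m₃ n₂ n₃ : ℤ), p.Prime → p % 4 = 3 → 1 ≤ t →
      ¬ (p : ℤ) ∣ n₂ * n₃ → ¬ (p : ℤ) ∣ (m₂ * n₃ - m₃ * n₂) →
      {z : ZMod (p ^ t) × ZMod (p ^ t) |
        (IsUnit z.1 ∨ IsUnit z.2) ∧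
        (-2 * (m₂ : ZMod (p ^ t)) * (z.1 ^ 2 + z.2 ^ 2)⁻¹
          + 4 * ((m₂ : ZMod (p ^ t)) * z.1 - (m₃ : ZMod (p ^ t)) * z.2) * z.1
              * ((z.1 ^ 2 + z.2 ^ 2)⁻¹) ^ 2 + (n₂ : ZMod (p ^ t)) = 0) ∧
        (2 * (m₃ : ZMod (p ^ t)) * (z.1 ^ 2 + z.2 ^ 2)⁻¹
          + 4 * ((m₂ : ZMod (p ^ t)) * z.1 - (m₃ : ZMod (p ^ t)) * z.2) * z.2
              * ((z.1 ^ 2 + z.2 ^ 2)⁻¹) ^ 2 + (n₃ : ZMod (p ^ t)) = 0)}.ncard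
        ≤ C := by
  refine ⟨2, ?_⟩
  intro p t m₂ m₃ n₂ n₃ hp hp3 ht hn hmn
  haveI : Fact p.Prime := ⟨hp⟩
  haveI : NeZero (p^t) := ⟨pow_ne_zero _ hp.pos.ne'⟩
  set S : Set (ZMod (p ^ t) × ZMod (p ^ t)) :=
    {z : ZMod (p ^ t) × ZMod (p ^ t) |
        (IsUnit z.1 ∨ IsUnit z.2) ∧
        (-2 * (m₂ : ZMod (p ^ t)) * (z.1 ^ 2 + z.2 ^ 2)⁻¹
          + 4 * ((m₂ : ZMod (p ^ t)) * z.1 - (m₃ : ZMod (p ^ t)) * z.2) * z.1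
              * ((z.1 ^ 2 + z.2 ^ 2)⁻¹) ^ 2 + (n₂ : ZMod (p ^ t)) = 0) ∧
        (2 * (m₃ : ZMod (p ^ t)) * (z.1 ^ 2 + z.2 ^ 2)⁻¹
          + 4 * ((m₂ : ZMod (p ^ t)) * z.1 - (m₃ : ZMod (p ^ t)) * z.2) * z.2
              * ((z.1 ^ 2 + z.2 ^ 2)⁻¹) ^ 2 + (n₃ : ZMod (p ^ t)) = 0)} with hSdef
  rcases S.eq_empty_or_nonempty with hS | ⟨w, hw⟩
  · rw [hS]; simp
  · have hn2 : ¬ (p:ℤ) ∣ n₂ := fun h => hn (h.mul_right n₃)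
    have hsub : S ⊆ {w, (-w.1, -w.2)} := by
      intro z hz
      obtain ⟨hndz, hdz⟩ := stationary_sol_dvd p t hp hp3 ht m₂ m₃ n₂ n₃ z hz.1 hz.2.1 hz.2.2
      obtain ⟨hndw, hdw⟩ := stationary_sol_dvd p t hp hp3 ht m₂ m₃ n₂ n₃ w hw.1 hw.2.1 hw.2.2
      set X : GaussianInt := ⟨(z.1.val:ℤ), (z.2.val:ℤ)⟩ with hX
      set Y : GaussianInt := ⟨(w.1.val:ℤ), (w.2.val:ℤ)⟩ with hY
      have hprime : Prime ((p:ℤ) : GaussianInt) := by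
        have := (GaussianInt.prime_iff_mod_four_eq_three_of_nat_prime p).2 hp3
        have hcast : ((p:ℤ) : GaussianInt) = ((p:ℕ) : GaussianInt) := by push_cast; ring
        rwa [hcast]
      have hnν : ¬ (((p:ℤ) : GaussianInt) ∣ (⟨n₂, -n₃⟩ : GaussianInt)) := by
        rw [Zsqrtd.intCast_dvd]
        rintro ⟨h1, -⟩
        exact hn2 h1
      have hdiff : (((p:ℤ) : GaussianInt))^t ∣ ((X - Y) * (X + Y)) * ⟨n₂, -n₃⟩ := by
        have : (X^2 * ⟨n₂,-n₃⟩ - ⟨-2*m₂, 2*m₃⟩) - (Y^2 * ⟨n₂,-n₃⟩ - ⟨-2*m₂, 2*m₃⟩)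
            = ((X - Y) * (X + Y)) * ⟨n₂, -n₃⟩ := by ring
        rw [← this]
        exact dvd_sub hdz hdw
      have hdiff2 : (((p:ℤ) : GaussianInt))^t ∣ (X - Y) * (X + Y) :=
        hprime.pow_dvd_of_dvd_mul_right t hnν hdiff
      have hnp2 : ¬ (((p:ℤ) : GaussianInt) ∣ (2 : GaussianInt)) := by
        intro h
        have h2 : ((2:ℤ) : GaussianInt) = (2 : GaussianInt) := by push_cast; ring
        rw [← h2, Zsqrtd.intCast_dvd_intCast] at h
        have hnat : p ∣ 2 := by exact_mod_cast h
        have := (Nat.prime_dvd_prime_iff_eq hp Nat.prime_two).1 hnat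
        omega
      have hπt : (((p:ℤ) : GaussianInt))^t = (((p^t : ℕ) : ℤ) : GaussianInt) := by
        push_cast; ring
      have key_eq : ∀ (c d : ZMod (p^t)), ((p^t : ℕ) : ℤ) ∣ ((c.val:ℤ) - (d.val:ℤ)) → c = d := by
        intro c d h
        have h0 : (((c.val:ℤ) - (d.val:ℤ) : ℤ) : ZMod (p^t)) = 0 :=
          (ZMod.intCast_zmod_eq_zero_iff_dvd _ _).2 h
        push_cast at h0
        rw [ZMod.natCast_rightInverse c, ZMod.natCast_rightInverse d] at h0
        exact sub_eq_zero.mp h0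
      have key_neg : ∀ (c d : ZMod (p^t)), ((p^t : ℕ) : ℤ) ∣ ((c.val:ℤ) + (d.val:ℤ)) → c = -d := by
        intro c d h
        have h0 : (((c.val:ℤ) + (d.val:ℤ) : ℤ) : ZMod (p^t)) = 0 :=
          (ZMod.intCast_zmod_eq_zero_iff_dvd _ _).2 h
        push_cast at h0
        rw [ZMod.natCast_rightInverse c, ZMod.natCast_rightInverse d] at h0
        exact eq_neg_of_add_eq_zero_left h0
      by_cases hcase : ((p:ℤ) : GaussianInt) ∣ (X + Y)
      · -- z = -w
        have hnd_diff : ¬ ((p:ℤ) : GaussianInt) ∣ (X - Y) := by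
          intro hd
          have h2X : ((p:ℤ) : GaussianInt) ∣ 2 * X := by
            have := dvd_add hd hcase
            have hid : (X - Y) + (X + Y) = 2 * X := by ring
            rwa [hid] at this
          rcases hprime.dvd_or_dvd h2X with h | h
          · exact hnp2 h
          · exact hndz h
        have hsum : (((p:ℤ) : GaussianInt))^t ∣ X + Y :=
          hprime.pow_dvd_of_dvd_mul_left t hnd_diff hdiff2
        rw [hπt] at hsum
        rw [Zsqrtd.intCast_dvd] at hsum
        obtain ⟨h1, h2⟩ := hsum
        simp only [hX, hY, Zsqrtd.re_add, Zsqrtd.im_add] at h1 h2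
        right
        have e1 : z.1 = -w.1 := key_neg _ _ h1
        have e2 : z.2 = -w.2 := key_neg _ _ h2
        exact Prod.ext e1 e2
      · -- z = w
        have hsum : (((p:ℤ) : GaussianInt))^t ∣ X - Y :=
          hprime.pow_dvd_of_dvd_mul_right t hcase hdiff2
        rw [hπt] at hsum
        rw [Zsqrtd.intCast_dvd] at hsum
        obtain ⟨h1, h2⟩ := hsum
        simp only [hX, hY, Zsqrtd.re_sub, Zsqrtd.im_sub] at h1 h2
        left
        have e1 : z.1 = w.1 := key_eq _ _ h1
        have e2 : z.2 = w.2 := key_eq _ _ h2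
        exact Prod.ext e1 e2
    calc S.ncard ≤ ({w, (-w.1, -w.2)} : Set _).ncard :=
          Set.ncard_le_ncard hsub (Set.toFinite _)
      _ ≤ ({(-w.1, -w.2)} : Set _).ncard + 1 := Set.ncard_insert_le _ _
      _ ≤ 2 := by rw [Set.ncard_singleton]
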